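/- Let Q be an n×n real symmetric positive semidefinite matrix and c ∈ ℝ^n with c_i ≥ 0 for all i, such that Q − diag(c) is positive semidefinite. Then for every x ∈ ℝ^n with x_i ∈ {0,1} for all i and every real z ≥ 0, one has √(xᵀQx) ≤ z if and only if there exists a real y ≥ 0 with xᵀ(Q − diag(c))x ≤ y² and ∑_{i=1}^n c_i x_i + y² ≤ z². -/

import Mathlib

open Matrix

/-- For Q ⪰ 0 symmetric, c ≥ 0 with Q − diag(c) ⪰ 0, binary x, and z ≥ 0:
√(xᵀQx) ≤ z ↔ ∃ y ≥ 0 with xᵀ(Q − diag(c))x ≤ y² and ∑ cᵢ xᵢ + y² ≤ z². -/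
theorem diagonal_extraction_equivalence
    (n : ℕ) (Q : Matrix (Fin n) (Fin n) ℝ) (hQ : Q.PosSemidef)
    (c : Fin n → ℝ) (hc : ∀ i, 0 ≤ c i)
    (hQc : (Q - Matrix.diagonal c).PosSemidef)
    (x : Fin n → ℝ) (hx : ∀ i, x i = 0 ∨ x i = 1) (z : ℝ) (hz : 0 ≤ z) :
    Real.sqrt (x ⬝ᵥ (Q *ᵥ x)) ≤ z ↔
      ∃ y : ℝ, 0 ≤ y ∧ x ⬝ᵥ ((Q - Matrix.diagonal c) *ᵥ x) ≤ y ^ 2 ∧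
        ∑ i, c i * x i + y ^ 2 ≤ z ^ 2 := by
  have hnn : 0 ≤ x ⬝ᵥ ((Q - Matrix.diagonal c) *ᵥ x) := by
    have := hQc.dotProduct_mulVec_nonneg x
    simpa using this
  have hdiag : x ⬝ᵥ (Matrix.diagonal c *ᵥ x) = ∑ i, c i * x i := by
    simp only [dotProduct, mulVec_diagonal]
    refine Finset.sum_congr rfl fun i _ => ?_
    rcases hx i with h | h <;> simp [h] <;> ring
  have hsplit : x ⬝ᵥ (Q *ᵥ x) =
      x ⬝ᵥ ((Q - Matrix.diagonal c) *ᵥ x) + ∑ i, c i * x i := by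
    rw [sub_mulVec, dotProduct_sub, hdiag]; ring
  have hQnn : 0 ≤ x ⬝ᵥ (Q *ᵥ x) := by
    have := hQ.dotProduct_mulVec_nonneg x
    simpa using this
  constructor
  · intro h
    refine ⟨Real.sqrt (x ⬝ᵥ ((Q - Matrix.diagonal c) *ᵥ x)), Real.sqrt_nonneg _, ?_, ?_⟩
    · rw [Real.sq_sqrt hnn]
    · rw [Real.sq_sqrt hnn]
      have : x ⬝ᵥ (Q *ᵥ x) ≤ z ^ 2 := by
        nlinarith [Real.sq_sqrt hQnn, Real.sqrt_nonneg (x ⬝ᵥ (Q *ᵥ x)), h]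
      linarith [hsplit]
  · rintro ⟨y, hy, h1, h2⟩
    have : x ⬝ᵥ (Q *ᵥ x) ≤ z ^ 2 := by linarith [hsplit]
    calc Real.sqrt (x ⬝ᵥ (Q *ᵥ x)) ≤ Real.sqrt (z ^ 2) := Real.sqrt_le_sqrt this
    _ = z := by rw [Real.sqrt_sq hz]
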